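/- Let 0 < ε < 1/9 and let p, q ∈ ℝ² be distinct points. Then for every point a ∈ Ã(p,q) and every point b ∈ B̂(p,q), one has (1 + ε)·‖a − p‖ + ‖p − q‖ + (1 + ε)·‖q − b‖ ≤ (1 + ε)·‖a − b‖. -/

import Mathlib

/-- The cone `W₁` with apex `p`, axis direction `q - p`, and aperture `√ε/2`. -/
def W1 (ε : ℝ) (p q : EuclideanSpace ℝ (Fin 2)) : Set (EuclideanSpace ℝ (Fin 2)) :=
  {x | x = p ∨ InnerProductGeometry.angle (x - p) (q - p) ≤ Real.sqrt ε / 4}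

/-- The cone `W₂` with apex `q`, axis direction `q - p`, and aperture `√ε`. -/
def W2 (ε : ℝ) (p q : EuclideanSpace ℝ (Fin 2)) : Set (EuclideanSpace ℝ (Fin 2)) :=
  {x | x = q ∨ InnerProductGeometry.angle (x - q) (q - p) ≤ Real.sqrt ε / 2}

/-- The region `B(p,q) = W₁ ∩ W₂`. -/
def Bset (ε : ℝ) (p q : EuclideanSpace ℝ (Fin 2)) : Set (EuclideanSpace ℝ (Fin 2)) :=
  W1 ε p q ∩ W2 ε p q

/-- The segment `Ā(p,q)` of length `(√ε/2)·‖q-p‖` on the line `pq`, with one endpoint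
at `p`, emanating away from `q`. -/
def Abar (ε : ℝ) (p q : EuclideanSpace ℝ (Fin 2)) : Set (EuclideanSpace ℝ (Fin 2)) :=
  {x | ∃ t : ℝ, 0 ≤ t ∧ t ≤ Real.sqrt ε / 2 * ‖q - p‖ ∧
    x = p - (t / ‖q - p‖) • (q - p)}

/-- `Ã(p,q)`: the points within distance `(3ε/32)·‖q-p‖` of `Ā(p,q)`. -/
def Atilde (ε : ℝ) (p q : EuclideanSpace ℝ (Fin 2)) : Set (EuclideanSpace ℝ (Fin 2)) :=
  {x | ∃ y ∈ Abar ε p q, dist x y ≤ 3 * ε / 32 * ‖q - p‖}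

/-- `B̂(p,q)`: the points within distance `(ε/32)·‖q-p‖` of `B(p,q)`. -/
def Bhat (ε : ℝ) (p q : EuclideanSpace ℝ (Fin 2)) : Set (EuclideanSpace ℝ (Fin 2)) :=
  {x | ∃ y ∈ Bset ε p q, dist x y ≤ ε / 32 * ‖q - p‖}

set_option maxHeartbeats 1000000 in
/-- For all `a ∈ Ã(p,q)` and `b ∈ B̂(p,q)`:
`(1+ε)·‖a-p‖ + ‖p-q‖ + (1+ε)·‖q-b‖ ≤ (1+ε)·‖a-b‖`. -/
theorem key_ineq_Atilde_Bhat (ε : ℝ) (hε0 : 0 < ε) (hε1 : ε < 1 / 9)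
    (p q : EuclideanSpace ℝ (Fin 2)) (hpq : p ≠ q)
    (a b : EuclideanSpace ℝ (Fin 2)) (ha : a ∈ Atilde ε p q) (hb : b ∈ Bhat ε p q) :
    (1 + ε) * ‖a - p‖ + ‖p - q‖ + (1 + ε) * ‖q - b‖ ≤ (1 + ε) * ‖a - b‖ := by
  obtain ⟨y, ⟨t, ht0, htle, hy⟩, hay⟩ := ha
  obtain ⟨c, ⟨_, hc⟩, hbc⟩ := hb
  set d : ℝ := ‖q - p‖ with hd_def
  have hqp : q - p ≠ 0 := sub_ne_zero.mpr (Ne.symm hpq)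
  have hd : 0 < d := norm_pos_iff.mpr hqp
  have hsq : Real.sqrt ε ≤ 1 / 3 := by
    have h1 : Real.sqrt ε ≤ Real.sqrt (1 / 9) := Real.sqrt_le_sqrt hε1.le
    have h2 : Real.sqrt (1 / 9) = 1 / 3 := by
      rw [show (1 / 9 : ℝ) = (1 / 3) ^ 2 by norm_num, Real.sqrt_sq (by norm_num)]
    linarith
  have htd : t ≤ d / 6 := by nlinarith
  have hay' : ‖a - y‖ ≤ 3 * ε / 32 * d := by rwa [← dist_eq_norm]
  have hbc' : ‖b - c‖ ≤ ε / 32 * d := by rwa [← dist_eq_norm]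
  -- ‖a - p‖ ≤ t + 3ε/32 d
  have hyp : ‖y - p‖ = t := by
    rw [hy]
    simp only [sub_sub_cancel_left, norm_neg, norm_smul]
    rw [Real.norm_eq_abs, abs_of_nonneg (by positivity)]
    field_simp
    rfl
  have hap : ‖a - p‖ ≤ t + 3 * ε / 32 * d := by
    calc ‖a - p‖ = ‖(a - y) + (y - p)‖ := by rw [show a - p = (a - y) + (y - p) by abel]
      _ ≤ ‖a - y‖ + ‖y - p‖ := norm_add_le _ _
      _ ≤ 3 * ε / 32 * d + t := by rw [hyp]; linarith
      _ = t + 3 * ε / 32 * d := by ring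
  have hpqd : ‖p - q‖ = d := by rw [norm_sub_rev]
  have habb : ‖a - c‖ ≤ ‖a - b‖ + ε / 32 * d := by
    calc ‖a - c‖ = ‖(a - b) + (b - c)‖ := by rw [show a - c = (a - b) + (b - c) by abel]
      _ ≤ ‖a - b‖ + ‖b - c‖ := norm_add_le _ _
      _ ≤ _ := by linarith
  rcases hc with hc | hang
  · -- c = q
    have hbc2 : ‖b - q‖ ≤ ε / 32 * d := by rw [← hc]; exact hbc'
    have hyq : ‖y - q‖ = d + t := by
      rw [hy]
      have : p - (t / d) • (q - p) - q = -((1 + t / d) • (q - p)) := by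
        rw [add_smul, one_smul]; abel
      rw [this, norm_neg, norm_smul, Real.norm_eq_abs, abs_of_nonneg (by positivity)]
      field_simp
      rfl
    have haq : d + t - 3 * ε / 32 * d ≤ ‖a - q‖ := by
      have h := norm_sub_norm_le (y - q) (y - a)
      have h2 : ‖y - q - (y - a)‖ = ‖a - q‖ := by rw [show y - q - (y - a) = a - q by abel]
      have h3 : ‖y - a‖ = ‖a - y‖ := norm_sub_rev _ _
      rw [h2, hyq, h3] at h
      linarith
    have hqb : ‖q - b‖ ≤ ε / 32 * d := by rwa [norm_sub_rev]
    have hab : d + t - 4 * ε / 32 * d ≤ ‖a - b‖ := by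
      have h := habb; rw [hc] at h; linarith
    rw [hpqd]
    have hpos : (0:ℝ) ≤ 1 + ε := by linarith
    have h1 := mul_le_mul_of_nonneg_left hab hpos
    have h2 := mul_le_mul_of_nonneg_left hap hpos
    have h3 := mul_le_mul_of_nonneg_left hqb hpos
    nlinarith [mul_pos hε0 hd, mul_nonneg (mul_nonneg hε0.le hε0.le) hd.le]
  · -- angle case
    have hcq : c - q ≠ 0 := by
      intro h
      rw [h] at hang
      rw [InnerProductGeometry.angle_zero_left] at hang
      have : Real.sqrt ε / 2 < Real.pi / 2 := by
        have := Real.pi_gt_three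
        linarith
      linarith
    set r : ℝ := ‖c - q‖ with hr_def
    have hr : 0 < r := norm_pos_iff.mpr hcq
    -- inner product bound from angle
    have hcos : (1 - ε / 8) * (r * d) ≤ (inner ℝ (c - q) (q - p) : ℝ) := by
      have h1 : Real.cos (InnerProductGeometry.angle (c - q) (q - p)) * (r * d)
          = (inner ℝ (c - q) (q - p) : ℝ) :=
        InnerProductGeometry.cos_angle_mul_norm_mul_norm _ _
      have h2 : Real.cos (Real.sqrt ε / 2)
          ≤ Real.cos (InnerProductGeometry.angle (c - q) (q - p)) := by
        apply Real.cos_le_cos_of_nonneg_of_le_pi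
        · exact InnerProductGeometry.angle_nonneg _ _
        · have := Real.pi_gt_three
          have := Real.sqrt_nonneg ε
          linarith
        · exact hang
      have h3 : 1 - ε / 8 ≤ Real.cos (Real.sqrt ε / 2) := by
        have := Real.one_sub_sq_div_two_le_cos (x := Real.sqrt ε / 2)
        have hs : Real.sqrt ε ^ 2 = ε := Real.sq_sqrt hε0.le
        have he : (Real.sqrt ε / 2) ^ 2 / 2 = ε / 8 := by rw [div_pow, hs]; ring
        linarith
      have h4 := mul_le_mul_of_nonneg_right (h3.trans h2) (mul_pos hr hd).le
      linarith
    -- main projection bound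
    have hkey : r + (d + t) * (1 - ε / 8) - 3 * ε / 32 * d ≤ ‖a - c‖ := by
      have hinner : ‖a - c‖ * r ≥ (inner ℝ (c - a) (c - q) : ℝ) := by
        have := real_inner_le_norm (c - a) (c - q)
        rw [norm_sub_rev c a] at this
        exact this
      have hqa : q - a = ((d + t) / d) • (q - p) - (a - y) := by
        rw [hy]
        rw [show ((d + t) / d : ℝ) = 1 + t / d by field_simp]
        rw [add_smul, one_smul]
        abel
      have hexp : (inner ℝ (c - a) (c - q) : ℝ)
          = r ^ 2 + ((d + t) / d) * inner ℝ (q - p) (c - q) - inner ℝ (a - y) (c - q) := by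
        have h1 : c - a = (c - q) + (q - a) := by abel
        have e1 : (inner ℝ (c - a) (c - q) : ℝ)
            = inner ℝ (c - q) (c - q) + inner ℝ (q - a) (c - q) := by
          rw [h1, inner_add_left]
        have e2 : (inner ℝ (q - a) (c - q) : ℝ)
            = ((d + t) / d) * inner ℝ (q - p) (c - q) - inner ℝ (a - y) (c - q) := by
          rw [hqa, inner_sub_left, real_inner_smul_left]
        have e3 : (inner ℝ (c - q) (c - q) : ℝ) = r ^ 2 :=
          real_inner_self_eq_norm_sq _
        rw [e1, e2, e3]
        ring
      have hie : (inner ℝ (a - y) (c - q) : ℝ) ≤ 3 * ε / 32 * d * r := by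
        calc (inner ℝ (a - y) (c - q) : ℝ) ≤ ‖a - y‖ * ‖c - q‖ := real_inner_le_norm _ _
          _ ≤ 3 * ε / 32 * d * r := by
            apply mul_le_mul hay' le_rfl (norm_nonneg _) (by positivity)
      have hqpc : (inner ℝ (q - p) (c - q) : ℝ) = inner ℝ (c - q) (q - p) := real_inner_comm _ _
      have hfrac : 0 ≤ (d + t) / d := by positivity
      have h4 : (inner ℝ (c - a) (c - q) : ℝ)
          ≥ r ^ 2 + ((d + t) / d) * ((1 - ε / 8) * (r * d)) - 3 * ε / 32 * d * r := by
        rw [hexp, hqpc]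
        have := mul_le_mul_of_nonneg_left hcos hfrac
        linarith
      have h5 : ((d + t) / d) * ((1 - ε / 8) * (r * d)) = (d + t) * (1 - ε / 8) * r := by
        field_simp
      rw [h5] at h4
      have h6 : ‖a - c‖ * r ≥ (r + (d + t) * (1 - ε / 8) - 3 * ε / 32 * d) * r := by
        nlinarith
      exact le_of_mul_le_mul_right (by linarith) hr
    have hqb : ‖q - b‖ ≤ r + ε / 32 * d := by
      calc ‖q - b‖ = ‖(q - c) + (c - b)‖ := by rw [show q - b = (q - c) + (c - b) by abel]
        _ ≤ ‖q - c‖ + ‖c - b‖ := norm_add_le _ _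
        _ ≤ r + ε / 32 * d := by
            rw [norm_sub_rev q c, norm_sub_rev c b]; linarith
    have hab : r + (d + t) * (1 - ε / 8) - 3 * ε / 32 * d - ε / 32 * d ≤ ‖a - b‖ := by
      linarith
    rw [hpqd]
    have hpos : (0:ℝ) ≤ 1 + ε := by linarith
    have h1 := mul_le_mul_of_nonneg_left hab hpos
    have h2 := mul_le_mul_of_nonneg_left hap hpos
    have h3 := mul_le_mul_of_nonneg_left hqb hpos
    nlinarith [mul_pos hε0 hd, mul_le_mul_of_nonneg_left htd hε0.le,
      mul_nonneg (mul_nonneg hε0.le hε0.le) hd.le,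
      mul_nonneg hε0.le (mul_nonneg hε0.le ht0), mul_nonneg hε0.le hr.le,
      mul_nonneg (mul_nonneg hε0.le hε0.le) hr.le]
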